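/- If r is a 2n-balanced two-state rotor type, then UD(r) ≡_n r and DU(r) ≡_n r; in particular UD(r) ≡_n DU(r). -/

import Mathlib

open scoped Classical

/-! ### Periodic sequences and rotor types

A rotor type is modelled as a function `f : ℕ → ℕ` (0-based reindexing of the paper's
sequence `r(1), r(2), …`, so the paper's `r(k)` is `f (k-1)`), together with its minimal
period `n`.  The states of the rotor are the values occurring in one period. -/

def IsPeriodicWith {α : Type*} (f : ℕ → α) (n : ℕ) : Prop := ∀ k, f (k + n) = f k

def IsMinimalPeriod {α : Type*} (f : ℕ → α) (n : ℕ) : Prop :=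
  0 < n ∧ IsPeriodicWith f n ∧ ∀ m, 0 < m → IsPeriodicWith f m → n ≤ m

noncomputable def minPeriod {α : Type*} (f : ℕ → α) : ℕ :=
  sInf {n | 0 < n ∧ IsPeriodicWith f n}

/-- `f` (with period `n`) reads the same forwards and backwards:
`r(k) = r(n+1-k)` for `1 ≤ k ≤ n`, written 0-based. -/
def Palindromic (f : ℕ → ℕ) (n : ℕ) : Prop := ∀ k < n, f k = f (n - 1 - k)

/-- `f` (with period `n`) is block-repetitive with block length `m`. -/
def BlockRepetitive (f : ℕ → ℕ) (n m : ℕ) : Prop :=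
  2 ≤ m ∧ m ∣ n ∧ ∀ k : ℕ, ∀ j < m, f (k * m + j) = f (k * m)

def Boppy (f : ℕ → ℕ) (n : ℕ) : Prop := Palindromic f n ∨ ∃ m, BlockRepetitive f n m

/-- The set of states of a rotor type of period `n`. -/
def states (f : ℕ → ℕ) (n : ℕ) : Finset ℕ := (Finset.range n).image f

/-- Number of occurrences of the state `v` among the first `n` terms of `f`. -/
noncomputable def countIn (f : ℕ → ℕ) (n v : ℕ) : ℕ :=
  ((Finset.range n).filter (fun k => f k = v)).card

/-- Merging reduction `s → s'`: replace every occurrence of `s` by `s'`. -/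
def merge (f : ℕ → ℕ) (s s' : ℕ) : ℕ → ℕ := fun k => if f k = s then s' else f k

/-- Destructive reduction `x(s)`: delete every occurrence of `s` and re-index. -/
noncomputable def destroy (f : ℕ → ℕ) (s : ℕ) : ℕ → ℕ :=
  fun k => f (Nat.nth (fun i => f i ≠ s) k)

/-- A two-state rotor type with states `1` and `2`, both occurring. -/
def TwoState (f : ℕ → ℕ) : Prop :=
  (∀ k, f k = 1 ∨ f k = 2) ∧ (∃ k, f k = 1) ∧ (∃ k, f k = 2)

/-! ### The compressor

The particle's trajectory alternates: at step `t` (0-based) the source `v1` fires its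
`(t+1)`-st term `f t`; if it is `1`, the particle moves to `v2`, whose firing count so far
is the number of `1`'s among `f 0, …, f (t-1)`; if it is `2`, it moves to `v3` similarly.
From `v2`/`v3` the particle either returns to the source (no target hit) or hits target
`4`/`5` and restarts at the source.  `X Y : Bool` encode the variation, `true` = `U`:
at `v2` state `1` routes up to `v1` iff `X = true`; at `v3` state `1` routes up iff
`Y = true`. -/

noncomputable def hitAt (X Y : Bool) (r : ℕ → ℕ) (t : ℕ) : Option ℕ :=
  if r t = 1 then
    (if decide (r (countIn r t 1) = 1) ≠ X then some 4 else none)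
  else
    (if decide (r (countIn r t 2) = 1) ≠ Y then some 5 else none)

/-- The hitting sequence of the compressor variation `XY` on rotor type `r`:
the subsequence of recorded targets (`4` or `5`), in order. -/
noncomputable def compSeq (X Y : Bool) (r : ℕ → ℕ) : ℕ → ℕ :=
  fun k => (hitAt X Y r (Nat.nth (fun t => (hitAt X Y r t).isSome = true) k)).getD 4

noncomputable def UUseq (r : ℕ → ℕ) : ℕ → ℕ := compSeq true true r
noncomputable def UDseq (r : ℕ → ℕ) : ℕ → ℕ := compSeq true false r
noncomputable def DUseq (r : ℕ → ℕ) : ℕ → ℕ := compSeq false true r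
noncomputable def DDseq (r : ℕ → ℕ) : ℕ → ℕ := compSeq false false r

/-- The compressor output with targets `4, 5` relabelled as states `1, 2`. -/
noncomputable def compOp (X Y : Bool) (r : ℕ → ℕ) : ℕ → ℕ := fun k => compSeq X Y r k - 3

noncomputable def UUop (r : ℕ → ℕ) : ℕ → ℕ := compOp true true r
noncomputable def UDop (r : ℕ → ℕ) : ℕ → ℕ := compOp true false r
noncomputable def DUop (r : ℕ → ℕ) : ℕ → ℕ := compOp false true r
noncomputable def DDop (r : ℕ → ℕ) : ℕ → ℕ := compOp false false r

/-- A finite composition of compressor operations (each given by its pair of letters),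
with the targets relabelled back to `1, 2` after each application. -/
noncomputable def applyOps (ops : List (Bool × Bool)) (r : ℕ → ℕ) : ℕ → ℕ :=
  ops.foldl (fun s o => compOp o.1 o.2 s) r

/-- The hitting sequence of the depth-2 binary tree network `BT` on `r`
(targets `1,2,3,4`): every firing of the source produces a hit. -/
noncomputable def BTseq (r : ℕ → ℕ) : ℕ → ℕ :=
  fun t => if r t = 1 then (if r (countIn r t 1) = 1 then 1 else 2)
           else (if r (countIn r t 2) = 1 then 3 else 4)

/-- Two sequences are equivalent if one is obtained from the other by a relabelling
that is injective on the values of the first (a bijective relabelling of states). -/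
def SeqEquiv {α β : Type*} (f : ℕ → α) (g : ℕ → β) : Prop :=
  ∃ ρ : α → β, (∀ k, ρ (f k) = g k) ∧ ∀ k l, ρ (f k) = ρ (f l) → f k = f l

/-- Every aligned block of length `m` of `f` contains states `1` and `2` equally often
(`m = 2n` gives `2n`-balance). -/
def BalancedBlocks (f : ℕ → ℕ) (m : ℕ) : Prop :=
  ∀ k : ℕ, countIn (fun j => f (k * m + j)) m 1 = countIn (fun j => f (k * m + j)) m 2

/-- `f ≡_m g` : some relabelling of `f` (injective on states) has the same multiset of
entries as `g` on every aligned block of length `m`. -/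
def BlockEquiv (f g : ℕ → ℕ) (m : ℕ) : Prop :=
  ∃ ρ : ℕ → ℕ, (∀ k l, ρ (f k) = ρ (f l) ↔ f k = f l) ∧
    ∀ k : ℕ, (Multiset.range m).map (fun j => ρ (f (k * m + j))) =
             (Multiset.range m).map (fun j => g (k * m + j))

/-- `L` is a balanced run decomposition of one period (of length `p`) of `f`:
a list of positive run lengths summing to `p` such that each corresponding
consecutive run contains `1` and `2` equally often. -/
noncomputable def IsBRD (f : ℕ → ℕ) (p : ℕ) (L : List ℕ) : Prop :=
  L.sum = p ∧ (∀ a ∈ L, 0 < a) ∧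
  ∀ i : Fin L.length,
    countIn (fun j => f ((L.take i.1).sum + j)) (L.get i) 1 =
    countIn (fun j => f ((L.take i.1).sum + j)) (L.get i) 2

/-- `L` is a uniform run decomposition of one period (of length `p`) of `f`:
a list of positive run lengths summing to `p` such that each corresponding
consecutive run is constant. -/
def IsURD (f : ℕ → ℕ) (p : ℕ) (L : List ℕ) : Prop :=
  L.sum = p ∧ (∀ a ∈ L, 0 < a) ∧
  ∀ i : Fin L.length, ∀ j < L.get i, f ((L.take i.1).sum + j) = f ((L.take i.1).sum)

/-- The maximal number of runs in a BRD of `f` (period `p`). -/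
noncomputable def maxBRD (f : ℕ → ℕ) (p : ℕ) : ℕ :=
  sSup {m | ∃ L : List ℕ, IsBRD f p L ∧ L.length = m}

/-- The balance coefficient `b(f)` (with respect to period length `p`). -/
noncomputable def balCoeff (f : ℕ → ℕ) (p : ℕ) : ℚ := (maxBRD f p : ℚ) / (p : ℚ)

/-- The type of a run decomposition, as an infinite periodic sequence of run data. -/
def typeSeq (L : List ℕ) : ℕ → ℕ := fun i => L.getD (i % L.length) 0

/-- A BURD rotor: it has a BRD and a URD of the same type, i.e. the `i`-th balanced run
has length `2·b_i` where `b_i` is the length of the `i`-th uniform run. -/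
noncomputable def IsBURD (f : ℕ → ℕ) (p : ℕ) : Prop :=
  ∃ L M : List ℕ, IsBRD f p L ∧ IsURD f p M ∧ ∀ i, typeSeq L i = 2 * typeSeq M i

/-- The ba-frequency `m(f) = 2k/p` of an ab-ba sequence with period length `p`,
where `k` is the number of `21` blocks per period. -/
noncomputable def baFreq (f : ℕ → ℕ) (p : ℕ) : ℚ :=
  (2 * (((Finset.range (p / 2)).filter (fun j => f (2 * j) = 2)).card : ℚ)) / (p : ℚ)

/-! ### Rotor-router networks

A rotor-router network on a vertex type `V`: a source, a finite set of targets
(outdegree 0), and at every non-target vertex `v` the rotor pattern, recorded by the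
sequence `rotor v : ℕ → V` of heads of its successive out-edges.  The underlying digraph
has an edge `v → w` (for non-target `v`) iff `w` occurs in `v`'s rotor pattern. -/

structure RotorNetwork (V : Type) where
  source : V
  target : Finset V
  rotor : V → ℕ → V

namespace RotorNetwork

variable {V : Type} [DecidableEq V]

/-- One step of the particle dynamics on states `(current position, firing counts)`:
at a target, record it and restart at the source; at a non-target vertex `v`, fire the
next term of `v`'s rotor pattern. -/
noncomputable def step (N : RotorNetwork V) (s : V × (V → ℕ)) : V × (V → ℕ) :=
  if s.1 ∈ N.target then (N.source, s.2)
  else (N.rotor s.1 (s.2 s.1), Function.update s.2 s.1 (s.2 s.1 + 1))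

/-- The full trajectory of the particle, started at the source with all rotors fresh. -/
noncomputable def traj (N : RotorNetwork V) : ℕ → V × (V → ℕ)
  | 0 => (N.source, fun _ => 0)
  | t + 1 => N.step (N.traj t)

/-- The hitting sequence: the subsequence of targets visited, in order. -/
noncomputable def hitSeq (N : RotorNetwork V) : ℕ → V :=
  fun k => (N.traj (Nat.nth (fun t => (N.traj t).1 ∈ N.target) k)).1

/-- Adjacency of the underlying digraph. -/
def adj (N : RotorNetwork V) (v w : V) : Prop :=
  v ∉ N.target ∧ ∃ k, N.rotor v k = w

/-- A valid rotor-router network: the source is not a target, there is at least one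
target, and every non-target vertex can reach some target. -/
def Valid (N : RotorNetwork V) : Prop :=
  N.source ∉ N.target ∧ N.target.Nonempty ∧
  ∀ v : V, v ∉ N.target → ∃ t ∈ N.target, Relation.ReflTransGen N.adj v t

/-- The rotor pattern at `v` has type `r`: it is `e ∘ r` for some assignment `e` of
states to out-neighbours. -/
def HasType (N : RotorNetwork V) (v : V) (r : ℕ → ℕ) : Prop :=
  ∃ e : ℕ → V, ∀ k, N.rotor v k = e (r k)

end RotorNetwork

/-- The alternating rotor type `1, 2, 1, 2, …` of period `2`. -/
def rot12 : ℕ → ℕ := fun k => if k % 2 = 0 then 1 else 2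

/-- `r` is universal: every rotor type `r'` is, up to a bijective relabelling of states,
the hitting sequence of some finite rotor-router network all of whose rotors have type `r`. -/
noncomputable def Universal (r : ℕ → ℕ) : Prop :=
  ∀ (r' : ℕ → ℕ) (n' : ℕ), IsMinimalPeriod r' n' →
    ∃ (m : ℕ) (N : RotorNetwork (Fin m)), N.Valid ∧
      (∀ v, v ∉ N.target → N.HasType v r) ∧ SeqEquiv N.hitSeq r'

/-- The (1-based) position of the `m`-th occurrence of the state `v` in `f`
(`posOf f 1 = f`, `posOf f 2 = g` in the paper's notation; `countIn f · 1 = F`,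
`countIn f · 2 = G`). -/
noncomputable def posOf (f : ℕ → ℕ) (v m : ℕ) : ℕ := Nat.nth (fun k => f k = v) (m - 1) + 1


section Statement8Aux

private lemma aux_Ico_val_eq (a len : ℕ) :
    (Finset.Ico a (a + len)).val = (Multiset.range len).map (fun i => a + i) := by
  have h := Multiset.map_add_left_Ico 0 len a
  rw [Nat.add_zero] at h
  have h2 : Multiset.Ico 0 len = Multiset.range len := by
    rw [Multiset.Ico, ← Finset.range_eq_Ico]; rfl
  rw [h2] at h
  exact h.symm

private lemma aux_filter_Ico_eq_image (A len : ℕ) (p : ℕ → Prop) [DecidablePred p] :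
    (Finset.Ico A (A + len)).filter p
      = ((Finset.range len).filter (fun j => p (A + j))).image (fun j => A + j) := by
  ext t
  simp only [Finset.mem_filter, Finset.mem_Ico, Finset.mem_image, Finset.mem_range]
  constructor
  · rintro ⟨⟨h1, h2⟩, hp⟩
    exact ⟨t - A, ⟨by omega, by rw [Nat.add_sub_cancel' h1]; exact hp⟩, by omega⟩
  · rintro ⟨j, ⟨hj, hp⟩, rfl⟩
    exact ⟨⟨by omega, by omega⟩, hp⟩

private lemma aux_card_filter_Ico (A len : ℕ) (p : ℕ → Prop) [DecidablePred p] :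
    ((Finset.Ico A (A + len)).filter p).card
      = ((Finset.range len).filter (fun j => p (A + j))).card := by
  rw [aux_filter_Ico_eq_image, Finset.card_image_of_injective _ (add_right_injective A)]

private lemma aux_two_filter_card (s : Finset ℕ) (r : ℕ → ℕ)
    (h2 : ∀ t, r t = 1 ∨ r t = 2) :
    (s.filter (fun t => r t = 1)).card + (s.filter (fun t => r t = 2)).card = s.card := by
  rw [show s.filter (fun t => r t = 2) = s.filter (fun t => ¬ r t = 1) from
    Finset.filter_congr (fun t _ => by rcases h2 t with h | h <;> simp [h])]
  exact Finset.card_filter_add_card_filter_not _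

private lemma aux_count_boundary {P : ℕ → Prop} [DecidablePred P] {m c : ℕ}
    (h : ∀ k, ((Finset.Ico (k * m) (k * m + m)).filter P).card = c) :
    ∀ k, Nat.count P (k * m) = k * c := by
  intro k
  induction k with
  | zero => simp
  | succ k ih =>
    have hsplit : Finset.range ((k+1) * m)
        = Finset.range (k * m) ∪ Finset.Ico (k * m) (k * m + m) := by
      rw [Finset.range_eq_Ico, Finset.range_eq_Ico,
        Finset.Ico_union_Ico_eq_Ico (Nat.zero_le _) (by omega)]
      congr 1
      ring
    have hdis : Disjoint ((Finset.range (k*m)).filter P)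
        ((Finset.Ico (k*m) (k*m+m)).filter P) := by
      apply Finset.disjoint_filter_filter
      rw [Finset.range_eq_Ico]
      exact Finset.Ico_disjoint_Ico_consecutive 0 (k*m) (k*m+m)
    rw [Nat.count_eq_card_filter_range, hsplit, Finset.filter_union,
      Finset.card_union_of_disjoint hdis, ← Nat.count_eq_card_filter_range, ih, h]
    ring

private lemma aux_infinite_of_count {P : ℕ → Prop} [DecidablePred P]
    (h : ∀ N : ℕ, ∃ t, N ≤ Nat.count P t) : (setOf P).Infinite := by
  by_contra hfin
  rw [Set.not_infinite] at hfin
  obtain ⟨t, ht⟩ := h (hfin.toFinset.card + 1)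
  have hle : Nat.count P t ≤ hfin.toFinset.card := by
    rw [Nat.count_eq_card_filter_range]
    refine Finset.card_le_card fun x hx => ?_
    rw [Set.Finite.mem_toFinset]
    exact (Finset.mem_filter.mp hx).2
  omega

private lemma aux_image_nth_Ico {P : ℕ → Prop} [DecidablePred P]
    (hinf : (setOf P).Infinite) {a b A B : ℕ}
    (hA : Nat.count P A = a) (hB : Nat.count P B = b) :
    (Finset.Ico a b).image (Nat.nth P) = (Finset.Ico A B).filter P := by
  ext t
  simp only [Finset.mem_image, Finset.mem_Ico, Finset.mem_filter]
  constructor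
  · rintro ⟨j, ⟨haj, hjb⟩, rfl⟩
    have hp := Nat.nth_mem_of_infinite hinf j
    have hc := Nat.count_nth_of_infinite hinf j
    refine ⟨⟨?_, ?_⟩, hp⟩
    · by_contra hAe
      push_neg at hAe
      have h1 : Nat.count P (Nat.nth P j + 1) ≤ Nat.count P A :=
        Nat.count_monotone P hAe
      rw [Nat.count_succ, hc, if_pos hp, hA] at h1
      omega
    · by_contra hBe
      push_neg at hBe
      have h1 : Nat.count P B ≤ Nat.count P (Nat.nth P j) := Nat.count_monotone P hBe
      rw [hc, hB] at h1
      omega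
  · rintro ⟨⟨hAt, htB⟩, hp⟩
    refine ⟨Nat.count P t, ⟨?_, ?_⟩, Nat.nth_count hp⟩
    · rw [← hA]; exact Nat.count_monotone P hAt
    · have h1 : Nat.count P (t+1) ≤ Nat.count P B := Nat.count_monotone P htB
      rw [Nat.count_succ, if_pos hp, hB] at h1
      omega

private lemma aux_image_val_map {f : ℕ → ℕ} (hf : Function.Injective f)
    (s : Finset ℕ) (g : ℕ → ℕ) :
    (s.image f).val.map g = s.val.map (fun x => g (f x)) := by
  rw [Finset.image_val_of_injOn hf.injOn, Multiset.map_map]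
  rfl

private lemma aux_compOp_master (n : ℕ) (hn : 1 ≤ n) (r : ℕ → ℕ)
    (h2 : ∀ t, r t = 1 ∨ r t = 2) (hbal : BalancedBlocks r (2 * n))
    (X Y : Bool) (u : ℕ) (hu : u = 1 ∨ u = 2)
    (hhit : ∀ t, ((hitAt X Y r t).isSome = true) ↔
      ((r t = 1 ∧ r (Nat.count (fun s => r s = 1) t) = u) ∨
       (r t = 2 ∧ r (Nat.count (fun s => r s = 2) t) = 3 - u))) :
    (∀ i, compOp X Y r i = 1 ∨ compOp X Y r i = 2) ∧
    ∀ k, (Multiset.range n).map (fun j => compOp X Y r (k * n + j)) =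
      Multiset.replicate
        ((Finset.Ico (k * n) (k * n + n)).filter (fun j => r j = u)).card 1
      + Multiset.replicate
        ((Finset.Ico (k * n) (k * n + n)).filter (fun j => r j = 3 - u)).card 2 := by
  have hval1 : ∀ t, r t = 1 → (hitAt X Y r t).isSome = true →
      (hitAt X Y r t).getD 4 - 3 = 1 := by
    intro t h1 hp
    rw [hitAt, if_pos h1] at hp ⊢
    by_cases hd : (decide (r (countIn r t 1) = 1) ≠ X)
    · rw [if_pos hd]; rfl
    · rw [if_neg hd] at hp; simp at hp
  have hval2 : ∀ t, r t = 2 → (hitAt X Y r t).isSome = true →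
      (hitAt X Y r t).getD 4 - 3 = 2 := by
    intro t h1 hp
    have hne : ¬ (r t = 1) := by omega
    rw [hitAt, if_neg hne] at hp ⊢
    by_cases hd : (decide (r (countIn r t 2) = 1) ≠ Y)
    · rw [if_pos hd]; rfl
    · rw [if_neg hd] at hp; simp at hp
  have hw : ∀ (k v : ℕ), v = 1 ∨ v = 2 →
      ((Finset.Ico (k * (2*n)) (k * (2*n) + 2*n)).filter (fun t => r t = v)).card = n := by
    intro k v hv
    have hb := hbal k
    simp only [countIn] at hb
    have hsum := aux_two_filter_card (Finset.range (2*n))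
      (fun j => r (k * (2*n) + j)) (fun j => h2 _)
    rw [Finset.card_range] at hsum
    beta_reduce at hsum
    rw [aux_card_filter_Ico]
    rcases hv with rfl | rfl <;> omega
  have hc1 : ∀ k, Nat.count (fun s => r s = 1) (k * (2*n)) = k * n :=
    aux_count_boundary (fun k => hw k 1 (Or.inl rfl))
  have hc2 : ∀ k, Nat.count (fun s => r s = 2) (k * (2*n)) = k * n :=
    aux_count_boundary (fun k => hw k 2 (Or.inr rfl))
  have hub : ∀ (Q : ℕ → Prop) (_ : DecidablePred Q),
      (∀ k, Nat.count Q (k * (2*n)) = k * n) → (setOf Q).Infinite := by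
    intro Q _ hc
    apply aux_infinite_of_count
    intro N
    refine ⟨N * (2*n), ?_⟩
    rw [hc]
    calc N = N * 1 := (Nat.mul_one N).symm
    _ ≤ N * n := Nat.mul_le_mul_left N hn
  have hinf1 : (setOf (fun s => r s = 1)).Infinite := hub (fun s => r s = 1) (by infer_instance) hc1
  have hinf2 : (setOf (fun s => r s = 2)).Infinite := hub (fun s => r s = 2) (by infer_instance) hc2
  have hB : ∀ (Q : ℕ → Prop) (_ : DecidablePred Q),
      (∀ k, Nat.count Q (k * (2*n)) = k * n) →
      ∀ k, Nat.count Q (k * (2*n) + 2*n) = k * n + n := by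
    intro Q _ hc k
    have h := hc (k+1)
    rw [show (k+1) * (2*n) = k * (2*n) + 2*n by ring, show (k+1)*n = k*n+n by ring] at h
    exact h
  have hcB1 : ∀ k, Nat.count (fun s => r s = 1) (k * (2*n) + 2*n) = k * n + n :=
    hB (fun s => r s = 1) (by infer_instance) hc1
  have hcB2 : ∀ k, Nat.count (fun s => r s = 2) (k * (2*n) + 2*n) = k * n + n :=
    hB (fun s => r s = 2) (by infer_instance) hc2
  have hSgen : ∀ (v w : ℕ) (hcv : ∀ k, Nat.count (fun s => r s = v) (k * (2*n)) = k * n)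
      (hcvB : ∀ k, Nat.count (fun s => r s = v) (k * (2*n) + 2*n) = k * n + n)
      (hinfv : (setOf (fun s => r s = v)).Infinite) (k : ℕ),
      (Finset.Ico (k*(2*n)) (k*(2*n)+2*n)).filter
          (fun t => r t = v ∧ r (Nat.count (fun s => r s = v) t) = w)
        = ((Finset.Ico (k*n) (k*n+n)).filter (fun j => r j = w)).image
            (Nat.nth (fun s => r s = v)) := by
    intro v w hcv hcvB hinfv k
    have himg := aux_image_nth_Ico hinfv (hcv k) (hcvB k)
    ext t
    constructor
    · intro ht
      rw [Finset.mem_filter] at ht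
      have h1 : t ∈ (Finset.Ico (k*(2*n)) (k*(2*n)+2*n)).filter (fun s => r s = v) :=
        Finset.mem_filter.mpr ⟨ht.1, ht.2.1⟩
      rw [← himg] at h1
      obtain ⟨j, hj, rfl⟩ := Finset.mem_image.mp h1
      refine Finset.mem_image.mpr ⟨j, Finset.mem_filter.mpr ⟨hj, ?_⟩, rfl⟩
      have h3 := ht.2.2
      rwa [Nat.count_nth_of_infinite hinfv] at h3
    · intro ht
      obtain ⟨j, hj, rfl⟩ := Finset.mem_image.mp ht
      rw [Finset.mem_filter] at hj
      have hmem : Nat.nth (fun s => r s = v) j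
          ∈ (Finset.Ico (k*(2*n)) (k*(2*n)+2*n)).filter (fun s => r s = v) := by
        rw [← himg]
        exact Finset.mem_image_of_mem _ hj.1
      rw [Finset.mem_filter] at hmem
      refine Finset.mem_filter.mpr ⟨hmem.1, hmem.2, ?_⟩
      rw [Nat.count_nth_of_infinite hinfv]
      exact hj.2
  have hsplitP : ∀ k, ((Finset.Ico (k*(2*n)) (k*(2*n)+2*n)).filter
        (fun t => (hitAt X Y r t).isSome = true)).val
      = ((Finset.Ico (k*(2*n)) (k*(2*n)+2*n)).filter
          (fun t => r t = 1 ∧ r (Nat.count (fun s => r s = 1) t) = u)).val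
      + ((Finset.Ico (k*(2*n)) (k*(2*n)+2*n)).filter
          (fun t => r t = 2 ∧ r (Nat.count (fun s => r s = 2) t) = 3 - u)).val := by
    intro k
    have hdis : Disjoint
        ((Finset.Ico (k*(2*n)) (k*(2*n)+2*n)).filter
          (fun t => r t = 1 ∧ r (Nat.count (fun s => r s = 1) t) = u))
        ((Finset.Ico (k*(2*n)) (k*(2*n)+2*n)).filter
          (fun t => r t = 2 ∧ r (Nat.count (fun s => r s = 2) t) = 3 - u)) := by
      rw [Finset.disjoint_filter]
      rintro x _ ⟨hx, _⟩ ⟨hy, _⟩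
      omega
    have hcong : (Finset.Ico (k*(2*n)) (k*(2*n)+2*n)).filter
          (fun t => (hitAt X Y r t).isSome = true)
        = (Finset.Ico (k*(2*n)) (k*(2*n)+2*n)).filter (fun t =>
            (r t = 1 ∧ r (Nat.count (fun s => r s = 1) t) = u) ∨
            (r t = 2 ∧ r (Nat.count (fun s => r s = 2) t) = 3 - u)) :=
      Finset.filter_congr (fun t _ => hhit t)
    rw [hcong, Finset.filter_or, ← Finset.disjUnion_eq_union _ _ hdis]
    rfl
  have hwP : ∀ k, ((Finset.Ico (k*(2*n)) (k*(2*n)+2*n)).filter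
      (fun t => (hitAt X Y r t).isSome = true)).card = n := by
    intro k
    have hv' : ((Finset.Ico (k*(2*n)) (k*(2*n)+2*n)).filter
          (fun t => (hitAt X Y r t).isSome = true)).card
        = ((Finset.Ico (k*(2*n)) (k*(2*n)+2*n)).filter
            (fun t => r t = 1 ∧ r (Nat.count (fun s => r s = 1) t) = u)).card
        + ((Finset.Ico (k*(2*n)) (k*(2*n)+2*n)).filter
            (fun t => r t = 2 ∧ r (Nat.count (fun s => r s = 2) t) = 3 - u)).card := by
      have hv := congrArg Multiset.card (hsplitP k)
      rw [Multiset.card_add] at hv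
      exact hv
    rw [hSgen 1 u hc1 hcB1 hinf1 k, hSgen 2 (3-u) hc2 hcB2 hinf2 k,
      Finset.card_image_of_injective _ (Nat.nth_injective hinf1),
      Finset.card_image_of_injective _ (Nat.nth_injective hinf2)] at hv'
    have hpart := aux_two_filter_card (Finset.Ico (k*n) (k*n+n)) r h2
    rw [Nat.card_Ico] at hpart
    rcases hu with rfl | rfl
    · norm_num at hv' hpart ⊢
      omega
    · norm_num at hv' hpart ⊢
      omega
  have hcP : ∀ k, Nat.count (fun t => (hitAt X Y r t).isSome = true) (k * (2*n)) = k * n :=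
    aux_count_boundary hwP
  have hcPB : ∀ k, Nat.count (fun t => (hitAt X Y r t).isSome = true) (k * (2*n) + 2*n)
      = k * n + n := hB (fun t => (hitAt X Y r t).isSome = true) (by infer_instance) hcP
  have hinfP : (setOf (fun t => (hitAt X Y r t).isSome = true)).Infinite :=
    hub (fun t => (hitAt X Y r t).isSome = true) (by infer_instance) hcP
  have hmem : ∀ i, compOp X Y r i = 1 ∨ compOp X Y r i = 2 := by
    intro i
    have hp : (hitAt X Y r
        (Nat.nth (fun t => (hitAt X Y r t).isSome = true) i)).isSome = true :=
      Nat.nth_mem_of_infinite hinfP i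
    rcases h2 (Nat.nth (fun t => (hitAt X Y r t).isSome = true) i) with h | h
    · exact Or.inl (hval1 _ h hp)
    · exact Or.inr (hval2 _ h hp)
  refine ⟨hmem, ?_⟩
  intro k
  have hm1 : ((Finset.Ico (k*n) (k*n+n)).filter (fun j => r j = u)).val.map
      (fun x => (fun t => (hitAt X Y r t).getD 4 - 3) (Nat.nth (fun s => r s = 1) x))
      = Multiset.replicate
        ((Finset.Ico (k * n) (k * n + n)).filter (fun j => r j = u)).card 1 := by
    refine (Multiset.map_congr rfl ?_).trans (Multiset.map_const' _ 1)
    intro j hj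
    have hj' := Finset.mem_filter.mp (Finset.mem_val.mp hj)
    have hr1 : r (Nat.nth (fun s => r s = 1) j) = 1 := Nat.nth_mem_of_infinite hinf1 j
    have hcnt : Nat.count (fun s => r s = 1) (Nat.nth (fun s => r s = 1) j) = j :=
      Nat.count_nth_of_infinite hinf1 j
    have hPt : (hitAt X Y r (Nat.nth (fun s => r s = 1) j)).isSome = true :=
      (hhit _).mpr (Or.inl ⟨hr1, by rw [hcnt]; exact hj'.2⟩)
    exact hval1 _ hr1 hPt
  have hm2 : ((Finset.Ico (k*n) (k*n+n)).filter (fun j => r j = 3 - u)).val.map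
      (fun x => (fun t => (hitAt X Y r t).getD 4 - 3) (Nat.nth (fun s => r s = 2) x))
      = Multiset.replicate
        ((Finset.Ico (k * n) (k * n + n)).filter (fun j => r j = 3 - u)).card 2 := by
    refine (Multiset.map_congr rfl ?_).trans (Multiset.map_const' _ 2)
    intro j hj
    have hj' := Finset.mem_filter.mp (Finset.mem_val.mp hj)
    have hr2 : r (Nat.nth (fun s => r s = 2) j) = 2 := Nat.nth_mem_of_infinite hinf2 j
    have hcnt : Nat.count (fun s => r s = 2) (Nat.nth (fun s => r s = 2) j) = j :=
      Nat.count_nth_of_infinite hinf2 j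
    have hPt : (hitAt X Y r (Nat.nth (fun s => r s = 2) j)).isSome = true :=
      (hhit _).mpr (Or.inr ⟨hr2, by rw [hcnt]; exact hj'.2⟩)
    exact hval2 _ hr2 hPt
  calc (Multiset.range n).map (fun j => compOp X Y r (k * n + j))
      = (Finset.Ico (k*n) (k*n+n)).val.map (fun i => compOp X Y r i) := by
        rw [aux_Ico_val_eq, Multiset.map_map]; rfl
    _ = ((Finset.Ico (k*n) (k*n+n)).image
          (Nat.nth (fun t => (hitAt X Y r t).isSome = true))).val.map
          (fun t => (hitAt X Y r t).getD 4 - 3) := by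
        rw [aux_image_val_map (Nat.nth_injective hinfP)]
        rfl
    _ = ((Finset.Ico (k*(2*n)) (k*(2*n)+2*n)).filter
          (fun t => (hitAt X Y r t).isSome = true)).val.map
          (fun t => (hitAt X Y r t).getD 4 - 3) := by
        rw [aux_image_nth_Ico hinfP (hcP k) (hcPB k)]
    _ = ((Finset.Ico (k*(2*n)) (k*(2*n)+2*n)).filter
          (fun t => r t = 1 ∧ r (Nat.count (fun s => r s = 1) t) = u)).val.map
          (fun t => (hitAt X Y r t).getD 4 - 3)
        + ((Finset.Ico (k*(2*n)) (k*(2*n)+2*n)).filter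
          (fun t => r t = 2 ∧ r (Nat.count (fun s => r s = 2) t) = 3 - u)).val.map
          (fun t => (hitAt X Y r t).getD 4 - 3) := by
        rw [hsplitP k, Multiset.map_add]
    _ = Multiset.replicate
          ((Finset.Ico (k * n) (k * n + n)).filter (fun j => r j = u)).card 1
        + Multiset.replicate
          ((Finset.Ico (k * n) (k * n + n)).filter (fun j => r j = 3 - u)).card 2 := by
        rw [hSgen 1 u hc1 hcB1 hinf1 k, hSgen 2 (3-u) hc2 hcB2 hinf2 k,
          aux_image_val_map (Nat.nth_injective hinf1),
          aux_image_val_map (Nat.nth_injective hinf2), hm1, hm2]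

end Statement8Aux

/-- If `r` is a `2n`-balanced two-state rotor type, then
`UD(r) ≡ₙ r` and `DU(r) ≡ₙ r`; in particular `UD(r) ≡ₙ DU(r)`
(targets `4, 5` identified with states `1, 2`). -/
theorem statement8 (n : ℕ) (hn : 1 ≤ n) (r : ℕ → ℕ) (p : ℕ)
    (h2 : TwoState r) (hmin : IsMinimalPeriod r p)
    (hbal : BalancedBlocks r (2 * n)) :
    BlockEquiv (UDop r) r n ∧ BlockEquiv (DUop r) r n ∧
    BlockEquiv (UDop r) (DUop r) n := by
  obtain ⟨h2', hex1, hex2⟩ := h2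
  have hhitUD : ∀ t, ((hitAt true false r t).isSome = true) ↔
      ((r t = 1 ∧ r (Nat.count (fun s => r s = 1) t) = 2) ∨
       (r t = 2 ∧ r (Nat.count (fun s => r s = 2) t) = 3 - 2)) := by
    intro t
    have hc1 : countIn r t 1 = Nat.count (fun s => r s = 1) t := by
      rw [Nat.count_eq_card_filter_range]; rfl
    have hc2 : countIn r t 2 = Nat.count (fun s => r s = 2) t := by
      rw [Nat.count_eq_card_filter_range]; rfl
    rcases h2' t with h | h
    · rcases h2' (Nat.count (fun s => r s = 1) t) with h' | h' <;>
        simp [hitAt, h, hc1, h']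
    · have hne : ¬ (r t = 1) := by omega
      rcases h2' (Nat.count (fun s => r s = 2) t) with h' | h' <;>
        simp [hitAt, h, hne, hc2, h']
  have hhitDU : ∀ t, ((hitAt false true r t).isSome = true) ↔
      ((r t = 1 ∧ r (Nat.count (fun s => r s = 1) t) = 1) ∨
       (r t = 2 ∧ r (Nat.count (fun s => r s = 2) t) = 3 - 1)) := by
    intro t
    have hc1 : countIn r t 1 = Nat.count (fun s => r s = 1) t := by
      rw [Nat.count_eq_card_filter_range]; rfl
    have hc2 : countIn r t 2 = Nat.count (fun s => r s = 2) t := by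
      rw [Nat.count_eq_card_filter_range]; rfl
    rcases h2' t with h | h
    · rcases h2' (Nat.count (fun s => r s = 1) t) with h' | h' <;>
        simp [hitAt, h, hc1, h']
    · have hne : ¬ (r t = 1) := by omega
      rcases h2' (Nat.count (fun s => r s = 2) t) with h' | h' <;>
        simp [hitAt, h, hne, hc2, h']
  have hUD := aux_compOp_master n hn r h2' hbal true false 2 (Or.inr rfl) hhitUD
  have hDU := aux_compOp_master n hn r h2' hbal false true 1 (Or.inl rfl) hhitDU
  have hrb : ∀ k, (Multiset.range n).map (fun j => r (k * n + j))
      = Multiset.replicate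
          ((Finset.Ico (k*n) (k*n+n)).filter (fun j => r j = 1)).card 1
      + Multiset.replicate
          ((Finset.Ico (k*n) (k*n+n)).filter (fun j => r j = 2)).card 2 := by
    intro k
    have hdis : Disjoint ((Finset.Ico (k*n) (k*n+n)).filter (fun j => r j = 1))
        ((Finset.Ico (k*n) (k*n+n)).filter (fun j => r j = 2)) := by
      rw [Finset.disjoint_filter]; rintro x _ hx hy; omega
    have hcong : Finset.Ico (k*n) (k*n+n)
        = (Finset.Ico (k*n) (k*n+n)).filter (fun j => r j = 1 ∨ r j = 2) := by
      rw [Finset.filter_true_of_mem]; intro x _; exact h2' x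
    have hpart : (Finset.Ico (k*n) (k*n+n)).val
        = ((Finset.Ico (k*n) (k*n+n)).filter (fun j => r j = 1)).val
        + ((Finset.Ico (k*n) (k*n+n)).filter (fun j => r j = 2)).val := by
      conv_lhs => rw [hcong]
      rw [Finset.filter_or, ← Finset.disjUnion_eq_union _ _ hdis]
      rfl
    calc (Multiset.range n).map (fun j => r (k * n + j))
        = (Finset.Ico (k*n) (k*n+n)).val.map r := by
          rw [aux_Ico_val_eq, Multiset.map_map]; rfl
      _ = ((Finset.Ico (k*n) (k*n+n)).filter (fun j => r j = 1)).val.map r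
          + ((Finset.Ico (k*n) (k*n+n)).filter (fun j => r j = 2)).val.map r := by
          rw [hpart, Multiset.map_add]
      _ = Multiset.replicate
            ((Finset.Ico (k*n) (k*n+n)).filter (fun j => r j = 1)).card 1
          + Multiset.replicate
            ((Finset.Ico (k*n) (k*n+n)).filter (fun j => r j = 2)).card 2 := by
          congr 1
          · refine (Multiset.map_congr rfl ?_).trans (Multiset.map_const' _ 1)
            intro j hj
            exact (Finset.mem_filter.mp (Finset.mem_val.mp hj)).2
          · refine (Multiset.map_congr rfl ?_).trans (Multiset.map_const' _ 2)
            intro j hj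
            exact (Finset.mem_filter.mp (Finset.mem_val.mp hj)).2
  have hinjUD : ∀ k l, (fun x => 3 - x) (UDop r k) = (fun x => 3 - x) (UDop r l)
      ↔ UDop r k = UDop r l := by
    intro k l
    simp only [UDop]
    rcases hUD.1 k with hk | hk <;> rcases hUD.1 l with hl | hl <;>
      rw [hk, hl] <;> omega
  refine ⟨⟨fun x => 3 - x, hinjUD, ?_⟩, ⟨fun x => x, fun k l => Iff.rfl, ?_⟩,
    ⟨fun x => 3 - x, hinjUD, ?_⟩⟩
  · intro k
    show (Multiset.range n).map (fun j => 3 - compOp true false r (k * n + j))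
        = (Multiset.range n).map (fun j => r (k * n + j))
    have hmm : (Multiset.range n).map (fun j => 3 - compOp true false r (k * n + j))
        = ((Multiset.range n).map
            (fun j => compOp true false r (k * n + j))).map (fun x => 3 - x) := by
      rw [Multiset.map_map]; rfl
    rw [hmm, hUD.2 k, hrb k, Multiset.map_add, Multiset.map_replicate,
      Multiset.map_replicate]
    norm_num [add_comm]
  · intro k
    show (Multiset.range n).map (fun j => compOp false true r (k * n + j))
        = (Multiset.range n).map (fun j => r (k * n + j))
    rw [hDU.2 k, hrb k]
  · intro k
    show (Multiset.range n).map (fun j => 3 - compOp true false r (k * n + j))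
        = (Multiset.range n).map (fun j => compOp false true r (k * n + j))
    have hmm : (Multiset.range n).map (fun j => 3 - compOp true false r (k * n + j))
        = ((Multiset.range n).map
            (fun j => compOp true false r (k * n + j))).map (fun x => 3 - x) := by
      rw [Multiset.map_map]; rfl
    rw [hmm, hUD.2 k, hDU.2 k, Multiset.map_add, Multiset.map_replicate,
      Multiset.map_replicate]
    norm_num [add_comm]
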